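/- If α is non-increasing and nonnegative and x has nonnegative entries, then OWA_α is monotone under adding items: for any vector x of length k < K (padded with zeros to length K) and any value v ≥ 0, OWA_α of x with v appended (padded to length K) is at least OWA_α of x padded to length K. -/

import Mathlib

noncomputable def sortDesc {K : ℕ} (x : Fin K → ℝ) : Fin K → ℝ :=
  x ∘ Tuple.sort (fun i => -x i)

noncomputable def owa {K : ℕ} (α x : Fin K → ℝ) : ℝ :=
  ∑ i, α i * sortDesc x i

noncomputable def owaVal (K : ℕ) (α : Fin K → ℝ) (vals : Multiset ℝ) : ℝ :=
  ∑ j : Fin K, α j * ((Multiset.sort vals (· ≤ ·)).reverse.getD j 0)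

lemma owa_aux : ∀ (l : List ℝ), l.Pairwise (· ≥ ·) → (∀ x ∈ l, (0:ℝ) ≤ x) →
    ∀ v : ℝ, 0 ≤ v → ∀ l' : List ℝ, l'.Pairwise (· ≥ ·) → l'.Perm (v :: l) →
    ∀ j, l.getD j 0 ≤ l'.getD j 0 := by
  intro l
  induction l with
  | nil =>
    intro _ _ v hv l' _ hperm j
    have hl' : l' = [v] := List.perm_singleton.mp hperm
    subst hl'
    cases j with
    | zero => simpa using hv
    | succ n => simp
  | cons a t IH =>
    intro hs hnn v hv l' hs' hperm j
    cases l' with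
    | nil => exact absurd hperm.length_eq (by simp)
    | cons b t' =>
      have ht : t.Pairwise (· ≥ ·) := hs.of_cons
      have ht' : t'.Pairwise (· ≥ ·) := hs'.of_cons
      have hb_ge : ∀ x ∈ v :: a :: t, x ≤ b := by
        intro x hx
        have hx' : x ∈ b :: t' := hperm.mem_iff.mpr hx
        rcases List.mem_cons.mp hx' with h | h
        · exact h.le
        · exact List.rel_of_pairwise_cons hs' h
      have hab : a ≤ b := hb_ge a (by simp)
      cases j with
      | zero =>
        simpa using hab
      | succ n =>
        have key : t.getD n 0 ≤ t'.getD n 0 := by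
          by_cases hbv : b = v
          · subst hbv
            have hperm' : t'.Perm (a :: t) := hperm.cons_inv
            exact IH ht (fun x hx => hnn x (List.mem_cons_of_mem a hx)) a
              (hnn a (by simp)) t' ht' hperm' n
          · have hbmem : b ∈ v :: a :: t := hperm.mem_iff.mp (by simp)
            have hbat : b ∈ a :: t := by
              rcases List.mem_cons.mp hbmem with h | h
              · exact absurd h hbv
              · exact h
            have hba : b ≤ a := by
              rcases List.mem_cons.mp hbat with h | h
              · exact h.le
              · exact List.rel_of_pairwise_cons hs h
            have heq : a = b := le_antisymm hab hba
            subst heq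
            have hswap : (v :: a :: t).Perm (a :: v :: t) := List.Perm.swap a v t
            have hperm' : t'.Perm (v :: t) := (hperm.trans hswap).cons_inv
            exact IH ht (fun x hx => hnn x (List.mem_cons_of_mem a hx)) v hv t' ht' hperm' n
        simpa using key

/-- For nonnegative non-increasing α, the OWA value is monotone under adding a
nonnegative-utility item. -/
theorem owa_mono_add_item {K : ℕ} (α : Fin K → ℝ)
    (hα0 : ∀ i, 0 ≤ α i) (hαdec : Antitone α)
    (vals : Multiset ℝ) (hcard : Multiset.card vals < K)
    (hvals : ∀ w ∈ vals, (0:ℝ) ≤ w) (v : ℝ) (hv : 0 ≤ v) :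
    owaVal K α vals ≤ owaVal K α (v ::ₘ vals) := by
  unfold owaVal
  set r := (Multiset.sort vals (· ≤ ·)).reverse with hr
  set r' := (Multiset.sort (v ::ₘ vals) (· ≤ ·)).reverse with hr'
  have hrs : r.Pairwise (· ≥ ·) := by
    rw [hr, List.pairwise_reverse]
    exact (Multiset.pairwise_sort vals (· ≤ ·)).imp fun h => h
  have hrs' : r'.Pairwise (· ≥ ·) := by
    rw [hr', List.pairwise_reverse]
    exact (Multiset.pairwise_sort (v ::ₘ vals) (· ≤ ·)).imp fun h => h
  have hrnn : ∀ x ∈ r, (0:ℝ) ≤ x := by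
    intro x hx
    rw [hr, List.mem_reverse, Multiset.mem_sort] at hx
    exact hvals x hx
  have hperm : r'.Perm (v :: r) := by
    rw [← Multiset.coe_eq_coe]
    rw [hr, hr']
    rw [← Multiset.cons_coe, Multiset.coe_reverse, Multiset.coe_reverse,
      Multiset.sort_eq, Multiset.sort_eq]
  refine Finset.sum_le_sum fun j _ => ?_
  exact mul_le_mul_of_nonneg_left (owa_aux r hrs hrnn v hv r' hrs' hperm j) (hα0 j)
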